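/- If two samples S and S' of equal size m over ℝ^d × {-1,1} have the same multiset of observations {x_i} and equal mean operators μ_S = μ_{S'}, then for every a-linear-odd loss l and every θ ∈ ℝ^d, the empirical l-risks are equal: R_{S,l}(θ) = R_{S',l}(θ). -/

import Mathlib

lemma sign_loss (l : ℝ → ℝ) (a : ℝ) (hl : ∀ x, l x - l (-x) = 2 * a * x)
    (y t : ℝ) (hy : y = 1 ∨ y = -1) :
    l (y * t) = (l t + l (-t)) / 2 + a * (y * t) := by
  have := hl t
  rcases hy with h | h <;> subst h <;> simp <;> linarith

theorem mean_operator_sufficiency {d m : ℕ} (hm : 1 ≤ m)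
    (l : ℝ → ℝ) (a : ℝ) (hl : ∀ x, l x - l (-x) = 2 * a * x)
    (x : Fin m → EuclideanSpace ℝ (Fin d))
    (y y' : Fin m → ℝ)
    (hy : ∀ i, y i = 1 ∨ y i = -1) (hy' : ∀ i, y' i = 1 ∨ y' i = -1)
    (hμ : (m : ℝ)⁻¹ • ∑ i, y i • x i = (m : ℝ)⁻¹ • ∑ i, y' i • x i)
    (θ : EuclideanSpace ℝ (Fin d)) :
    (1 / (m : ℝ)) * ∑ i, l (y i * (inner ℝ θ (x i) : ℝ))
      = (1 / (m : ℝ)) * ∑ i, l (y' i * (inner ℝ θ (x i) : ℝ)) := by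
  have hm0 : (m : ℝ) ≠ 0 := by positivity
  have hsum : ∑ i, y i • x i = ∑ i, y' i • x i := by
    have := smul_right_injective (EuclideanSpace ℝ (Fin d)) (inv_ne_zero hm0) hμ
    exact this
  have hinner : ∑ i, y i * (inner ℝ θ (x i) : ℝ)
      = ∑ i, y' i * (inner ℝ θ (x i) : ℝ) := by
    have h1 : ∀ (z : Fin m → ℝ), ∑ i, z i * (inner ℝ θ (x i) : ℝ)
        = (inner ℝ θ (∑ i, z i • x i) : ℝ) := by
      intro z
      rw [inner_sum]
      exact Finset.sum_congr rfl fun i _ => (real_inner_smul_right θ (x i) (z i)).symm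
    rw [h1 y, h1 y', hsum]
  congr 1
  calc ∑ i, l (y i * (inner ℝ θ (x i) : ℝ))
      = ∑ i, ((l (inner ℝ θ (x i)) + l (-(inner ℝ θ (x i) : ℝ))) / 2
          + a * (y i * (inner ℝ θ (x i) : ℝ))) := by
        exact Finset.sum_congr rfl fun i _ => sign_loss l a hl _ _ (hy i)
    _ = ∑ i, (l (inner ℝ θ (x i)) + l (-(inner ℝ θ (x i) : ℝ))) / 2
          + a * ∑ i, y i * (inner ℝ θ (x i) : ℝ) := by
        rw [Finset.sum_add_distrib, Finset.mul_sum]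
    _ = ∑ i, (l (inner ℝ θ (x i)) + l (-(inner ℝ θ (x i) : ℝ))) / 2
          + a * ∑ i, y' i * (inner ℝ θ (x i) : ℝ) := by rw [hinner]
    _ = ∑ i, l (y' i * (inner ℝ θ (x i) : ℝ)) := by
        rw [Finset.mul_sum, ← Finset.sum_add_distrib]
        exact Finset.sum_congr rfl fun i _ => (sign_loss l a hl _ _ (hy' i)).symm
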